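/- Let (φ, G) and (φ', G') be pseudo-curve generators, with pseudo-curves PC = closure of graph of φ and PC' = closure of graph of φ'. Then PC = PC' if and only if φ(θ) = φ'(θ) for every θ ∈ G ∩ G'; equivalently, d∞((φ,G),(φ',G')) = 0 if and only if the two generators define the same pseudo-curve. -/

import Mathlib

open Set

/-- The graph of `φ` over `G`. -/
def graphOn (G : Set UnitAddCircle) (φ : UnitAddCircle → ℝ) : Set (UnitAddCircle × ℝ) :=
  (fun θ => (θ, φ θ)) '' G

/-- At a point of `G'` where `φ'` is continuous within `G'`, the fiber of the closure
of the graph is a single point. -/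
lemma fiber_of_mem_closure_graph (G' : Set UnitAddCircle) (φ' : UnitAddCircle → ℝ)
    (hφ'c : ContinuousOn φ' G') {θ : UnitAddCircle} {y : ℝ}
    (hθ : θ ∈ G') (h : (θ, y) ∈ closure (graphOn G' φ')) : y = φ' θ := by
  rw [mem_closure_iff_seq_limit] at h
  obtain ⟨x, hx, hxt⟩ := h
  choose t ht hxt' using hx
  have h1 : Filter.Tendsto (fun n => (x n).1) Filter.atTop (nhds θ) :=
    (continuous_fst.tendsto _).comp hxt
  have h2 : Filter.Tendsto (fun n => (x n).2) Filter.atTop (nhds y) :=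
    (continuous_snd.tendsto _).comp hxt
  have hfst : ∀ n, (x n).1 = t n := fun n => congrArg Prod.fst (hxt' n).symm
  have hsnd : ∀ n, (x n).2 = φ' (t n) := fun n => congrArg Prod.snd (hxt' n).symm
  have h1' : Filter.Tendsto t Filter.atTop (nhdsWithin θ G') := by
    rw [tendsto_nhdsWithin_iff]
    refine ⟨by simpa only [hfst] using h1, Filter.Eventually.of_forall ht⟩
  have h3 : Filter.Tendsto (fun n => φ' (t n)) Filter.atTop (nhds (φ' θ)) :=
    ((hφ'c θ hθ).tendsto).comp h1'
  have h2' : Filter.Tendsto (fun n => φ' (t n)) Filter.atTop (nhds y) := by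
    simpa only [hsnd] using h2
  exact tendsto_nhds_unique h2' h3

/-- If `H ⊆ G` is dense in `G` and `φ` is continuous on `G`, the graph over `G` lies
in the closure of the graph over `H`. -/
lemma closure_graph_eq_of_dense (G H : Set UnitAddCircle) (hHG : H ⊆ G)
    (hd : G ⊆ closure H) (φ : UnitAddCircle → ℝ) (hc : ContinuousOn φ G) :
    closure (graphOn G φ) = closure (graphOn H φ) := by
  refine le_antisymm ?_ (closure_mono (image_mono hHG))
  refine closure_minimal ?_ isClosed_closure
  rintro _ ⟨θ, hθ, rfl⟩
  have hne : (nhdsWithin θ H).NeBot := mem_closure_iff_nhdsWithin_neBot.mp (hd hθ)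
  have htend : Filter.Tendsto (fun t => (t, φ t)) (nhdsWithin θ H) (nhds (θ, φ θ)) := by
    refine Filter.Tendsto.prodMk_nhds (nhdsWithin_le_nhds) ?_
    exact ((hc θ hθ).tendsto).mono_left (nhdsWithin_mono θ hHG)
  exact mem_closure_of_tendsto htend
    (Filter.eventually_of_mem self_mem_nhdsWithin fun t htH => ⟨t, htH, rfl⟩)

/-- Two pseudo-curve generators define the same pseudo-curve if and
only if their generating functions agree on `G ∩ G'` (equivalently, their supremum
pseudo-distance vanishes). -/
theorem statement9 (a b : ℝ) (hab : a ≤ b)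
    (G G' : Set UnitAddCircle)
    (hG : G ∈ residual UnitAddCircle) (hG' : G' ∈ residual UnitAddCircle)
    (φ φ' : UnitAddCircle → ℝ)
    (hφc : ContinuousOn φ G) (hφ'c : ContinuousOn φ' G')
    (hφI : ∀ θ ∈ G, φ θ ∈ Icc a b) (hφ'I : ∀ θ ∈ G', φ' θ ∈ Icc a b) :
    closure (graphOn G φ) = closure (graphOn G' φ') ↔ ∀ θ ∈ G ∩ G', φ θ = φ' θ := by
  constructor
  · intro h θ hθ
    have hmem : (θ, φ θ) ∈ closure (graphOn G' φ') := by
      rw [← h]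
      exact subset_closure ⟨θ, hθ.1, rfl⟩
    exact fiber_of_mem_closure_graph G' φ' hφ'c hθ.2 hmem
  · intro h
    have hdense : Dense (G ∩ G') := dense_of_mem_residual (Filter.inter_mem hG hG')
    have hsub : ∀ s : Set UnitAddCircle, s ⊆ closure (G ∩ G') := fun s x _ =>
      hdense.closure_eq ▸ mem_univ x
    have e1 : closure (graphOn G φ) = closure (graphOn (G ∩ G') φ) :=
      closure_graph_eq_of_dense G (G ∩ G') inter_subset_left (hsub G) φ hφc
    have e2 : closure (graphOn G' φ') = closure (graphOn (G ∩ G') φ') :=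
      closure_graph_eq_of_dense G' (G ∩ G') inter_subset_right (hsub G') φ' hφ'c
    have e3 : graphOn (G ∩ G') φ = graphOn (G ∩ G') φ' := by
      unfold _root_.graphOn
      exact image_congr fun θ hθ => by rw [h θ hθ]
    rw [e1, e2, e3]
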